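/- Let k have characteristic 2 and U = u(m). The 3-dimensional simple module V₁ is self-dual: V₁* ≅ V₁ as U-modules, where the dual module structure uses the antipode-type map determined by a ↦ a, b ↦ b, c ↦ c on the opposite action (equivalently, x·φ = φ∘ρ(S(x)) with S the antipode of the restricted enveloping algebra, S(a)=a, S(b)=b, S(c)=c in characteristic 2). -/

import Mathlib

/-- The 3-dimensional simple u(m)-module V₁ is self-dual (characteristic 2):
there is a linear isomorphism T from V₁ to its dual intertwining the action,
where the dual action is x·φ = φ ∘ ρ(S(x)) with the antipode S fixing a, b, c. -/
theorem um_V1_self_dual (k : Type*) [Field k] [IsAlgClosed k] [CharP k 2] :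
    let A := Matrix.mulVecLin (!![0,0,0; 1,0,0; 0,1,0] : Matrix (Fin 3) (Fin 3) k)
    let B := Matrix.mulVecLin (!![0,1,0; 0,0,1; 0,0,0] : Matrix (Fin 3) (Fin 3) k)
    let C := Matrix.mulVecLin (!![1,0,0; 0,0,0; 0,0,1] : Matrix (Fin 3) (Fin 3) k)
    ∃ T : (Fin 3 → k) ≃ₗ[k] Module.Dual k (Fin 3 → k),
      (∀ v, T (A v) = (T v) ∘ₗ A) ∧
      (∀ v, T (B v) = (T v) ∘ₗ B) ∧
      (∀ v, T (C v) = (T v) ∘ₗ C) := by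
  intro A B C
  let J : (Fin 3 → k) →ₗ[k] (Fin 3 → k) :=
    Matrix.mulVecLin (!![0,0,1; 0,1,0; 1,0,0] : Matrix (Fin 3) (Fin 3) k)
  have hJJ : J ∘ₗ J = LinearMap.id := by
    apply LinearMap.ext
    intro v
    funext i
    fin_cases i <;>
      simp [J, Matrix.mulVecLin_apply, Matrix.mulVec, dotProduct,
        Fin.sum_univ_three]
  let E : (Fin 3 → k) ≃ₗ[k] (Fin 3 → k) := LinearEquiv.ofLinear J J hJJ hJJ
  let T : (Fin 3 → k) ≃ₗ[k] Module.Dual k (Fin 3 → k) :=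
    E.trans (Pi.basisFun k (Fin 3)).toDualEquiv
  refine ⟨T, ?_, ?_, ?_⟩ <;>
  · intro v
    apply LinearMap.ext
    intro w
    simp only [T, E, LinearEquiv.trans_apply, LinearEquiv.ofLinear_apply,
      LinearMap.comp_apply]
    simp [Module.Basis.toDualEquiv, Module.Basis.toDual, A, B, C, J, Matrix.mulVecLin_apply,
      Matrix.mulVec, dotProduct, Fin.sum_univ_three, Pi.basisFun_apply,
      mul_comm]
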